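/- Hill's lunar Hamiltonian H_H has exactly one critical value, namely -3^{4/3}/2. More precisely, a point (q,p) in (ℝ²∖{(0,0)})×ℝ² is a critical point of H_H if and only if q = (±3^{-1/3}, 0) and p = (0, ∓3^{-1/3}) (with matching signs), and at these two critical points H_H(q,p) = -3^{4/3}/2; hence the set of critical values of H_H equals {-3^{4/3}/2}. -/

import Mathlib

open ContinuousLinearMap

/-- Hill's lunar Hamiltonian `H_H(q,p) = ½|p|² − 1/|q| + q₁p₂ − q₂p₁ − q₁² + ½q₂²`
on `(ℝ²∖{0}) × ℝ²`, written with coordinates. -/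
noncomputable def HH (x : (ℝ × ℝ) × (ℝ × ℝ)) : ℝ :=
  (1/2) * (x.2.1^2 + x.2.2^2) - 1 / Real.sqrt (x.1.1^2 + x.1.2^2)
    + x.1.1 * x.2.2 - x.1.2 * x.2.1 - x.1.1^2 + (1/2) * x.1.2^2

set_option maxHeartbeats 1000000 in
lemma hh_key (q p : ℝ × ℝ) (hq : q ≠ 0) :
    ∃ L : ((ℝ × ℝ) × (ℝ × ℝ)) →L[ℝ] ℝ, HasFDerivAt HH L (q,p) ∧ ∀ v : (ℝ×ℝ)×(ℝ×ℝ),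
    L v = (q.1/((q.1^2+q.2^2)*Real.sqrt (q.1^2+q.2^2)) + p.2 - 2*q.1) * v.1.1
        + (q.2/((q.1^2+q.2^2)*Real.sqrt (q.1^2+q.2^2)) - p.1 + q.2) * v.1.2
        + (p.1 - q.2) * v.2.1 + (p.2 + q.1) * v.2.2 := by
  have hq' : q.1 ≠ 0 ∨ q.2 ≠ 0 := by
    by_contra h; push_neg at h; exact hq (Prod.ext h.1 h.2)
  have hs : (0:ℝ) < q.1^2 + q.2^2 := by
    rcases hq' with h | h
    · exact add_pos_of_pos_of_nonneg (by positivity) (sq_nonneg _)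
    · exact add_pos_of_nonneg_of_pos (sq_nonneg _) (by positivity)
  have hr : (0:ℝ) < Real.sqrt (q.1^2 + q.2^2) := Real.sqrt_pos.mpr hs
  set pi11 : ((ℝ × ℝ) × (ℝ × ℝ)) →L[ℝ] ℝ := (fst ℝ ℝ ℝ).comp (fst ℝ (ℝ×ℝ) (ℝ×ℝ)) with hpi11
  set pi12 : ((ℝ × ℝ) × (ℝ × ℝ)) →L[ℝ] ℝ := (snd ℝ ℝ ℝ).comp (fst ℝ (ℝ×ℝ) (ℝ×ℝ)) with hpi12
  set pi21 : ((ℝ × ℝ) × (ℝ × ℝ)) →L[ℝ] ℝ := (fst ℝ ℝ ℝ).comp (snd ℝ (ℝ×ℝ) (ℝ×ℝ)) with hpi21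
  set pi22 : ((ℝ × ℝ) × (ℝ × ℝ)) →L[ℝ] ℝ := (snd ℝ ℝ ℝ).comp (snd ℝ (ℝ×ℝ) (ℝ×ℝ)) with hpi22
  have h11 : HasFDerivAt (fun x : (ℝ×ℝ)×(ℝ×ℝ) => x.1.1) pi11 (q,p) := pi11.hasFDerivAt
  have h12 : HasFDerivAt (fun x : (ℝ×ℝ)×(ℝ×ℝ) => x.1.2) pi12 (q,p) := pi12.hasFDerivAt
  have h21 : HasFDerivAt (fun x : (ℝ×ℝ)×(ℝ×ℝ) => x.2.1) pi21 (q,p) := pi21.hasFDerivAt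
  have h22 : HasFDerivAt (fun x : (ℝ×ℝ)×(ℝ×ℝ) => x.2.2) pi22 (q,p) := pi22.hasFDerivAt
  have hS := (h11.mul h11).add (h12.mul h12)
  have hg : HasDerivAt (fun t : ℝ => (Real.sqrt t)⁻¹)
      (-(1 / (2 * Real.sqrt (q.1*q.1 + q.2*q.2))) / Real.sqrt (q.1*q.1 + q.2*q.2) ^ 2)
      (q.1*q.1 + q.2*q.2) := by
    have h1 : HasDerivAt Real.sqrt (1 / (2 * Real.sqrt (q.1*q.1 + q.2*q.2))) (q.1*q.1 + q.2*q.2) :=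
      Real.hasDerivAt_sqrt (by nlinarith)
    exact h1.inv (by rw [show q.1*q.1+q.2*q.2 = q.1^2+q.2^2 by ring]; exact hr.ne')
  have hinv := hg.comp_hasFDerivAt (q,p) hS
  have hbig := (((((h21.mul h21).add (h22.mul h22)).const_mul (1/2:ℝ)).sub hinv).add
      (h11.mul h22)).sub (h12.mul h21) |>.sub (h11.mul h11) |>.add
      (((h12.mul h12)).const_mul (1/2:ℝ))
  have heq : HH =ᶠ[nhds ((q,p))] (fun x : (ℝ×ℝ)×(ℝ×ℝ) =>
      1 / 2 * (x.2.1 * x.2.1 + x.2.2 * x.2.2)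
        - ((fun t => (Real.sqrt t)⁻¹) ∘ fun x : (ℝ×ℝ)×(ℝ×ℝ) => x.1.1 * x.1.1 + x.1.2 * x.1.2) x
        + x.1.1 * x.2.2 - x.1.2 * x.2.1 - x.1.1 * x.1.1 + 1 / 2 * (x.1.2 * x.1.2)) :=
    Filter.Eventually.of_forall fun x => by
      simp only [HH, Function.comp, one_div]; ring_nf
  have hHH := hbig.congr_of_eventuallyEq heq
  refine ⟨_, hHH, fun v => ?_⟩
  have hsq : Real.sqrt (q.1*q.1 + q.2*q.2) = Real.sqrt (q.1^2+q.2^2) := by ring_nf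
  simp only [coe_comp', ContinuousLinearMap.add_apply, ContinuousLinearMap.sub_apply,
    ContinuousLinearMap.smul_apply, coe_smul', Pi.smul_apply, Function.comp_apply,
    ContinuousLinearMap.coe_fst', ContinuousLinearMap.coe_snd', smul_eq_mul, hpi11, hpi12, hpi21, hpi22,
    hsq]
  have h2 : Real.sqrt (q.1^2+q.2^2) ^ 2 = q.1^2+q.2^2 := Real.sq_sqrt hs.le
  field_simp
  ring_nf
  rw [h2]; ring

set_option maxHeartbeats 1600000 in
/-- Hill's lunar Hamiltonian has exactly one critical value, `-3^{4/3}/2`: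
`(q,p)` with `q ≠ 0` is a critical point of `H_H` iff
`(q,p) = ((3^{-1/3},0),(0,-3^{-1/3}))` or `(q,p) = ((-3^{-1/3},0),(0,3^{-1/3}))`;
at every critical point `H_H = -3^{4/3}/2`; and the set of critical values
of `H_H` equals `{-3^{4/3}/2}`. -/
theorem hill_critical_value :
    (∀ q p : ℝ × ℝ, q ≠ 0 →
      (HasFDerivAt HH (0 : ((ℝ × ℝ) × (ℝ × ℝ)) →L[ℝ] ℝ) (q, p) ↔
        ((q = ((3:ℝ) ^ (-(1:ℝ)/3), 0) ∧ p = (0, -((3:ℝ) ^ (-(1:ℝ)/3)))) ∨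
         (q = (-((3:ℝ) ^ (-(1:ℝ)/3)), 0) ∧ p = (0, (3:ℝ) ^ (-(1:ℝ)/3)))))) ∧
    (∀ q p : ℝ × ℝ, q ≠ 0 →
      HasFDerivAt HH (0 : ((ℝ × ℝ) × (ℝ × ℝ)) →L[ℝ] ℝ) (q, p) →
      HH (q, p) = -((3:ℝ) ^ ((4:ℝ)/3) / 2)) ∧
    {c : ℝ | ∃ q p : ℝ × ℝ, q ≠ 0 ∧
        HasFDerivAt HH (0 : ((ℝ × ℝ) × (ℝ × ℝ)) →L[ℝ] ℝ) (q, p) ∧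
        HH (q, p) = c} = {-((3:ℝ) ^ ((4:ℝ)/3) / 2)} := by
  set a : ℝ := (3:ℝ) ^ (-(1:ℝ)/3) with ha
  have ha0 : 0 < a := Real.rpow_pos_of_pos (by norm_num) _
  have ha3 : a ^ 3 = 1/3 := by
    rw [ha, ← Real.rpow_natCast ((3:ℝ)^(-(1:ℝ)/3)) 3, ← Real.rpow_mul (by norm_num : (0:ℝ) ≤ 3)]
    norm_num
  have hb : a * (3:ℝ) ^ ((4:ℝ)/3) = 3 := by
    rw [ha, ← Real.rpow_add (by norm_num : (0:ℝ) < 3)]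
    norm_num
  -- the two candidate critical points are critical points
  have hcrit : ∀ ε : ℝ, ε = 1 ∨ ε = -1 →
      HasFDerivAt HH (0 : ((ℝ × ℝ) × (ℝ × ℝ)) →L[ℝ] ℝ) ((ε * a, 0), (0, -(ε * a))) := by
    intro ε hε
    have hqne : ((ε * a, 0) : ℝ × ℝ) ≠ 0 := by
      rcases hε with h | h <;> subst h <;>
        simp [Prod.ext_iff, ha0.ne', (neg_ne_zero.mpr ha0.ne' : -a ≠ 0)]
    obtain ⟨L, hL, hLv⟩ := hh_key (ε * a, 0) (0, -(ε * a)) hqne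
    have he2 : ε^2 = 1 := by rcases hε with h | h <;> subst h <;> norm_num
    have hsqrt : Real.sqrt ((ε * a)^2 + 0^2) = a := by
      rw [show (ε*a)^2 + 0^2 = a^2 by rw [mul_pow, he2]; ring]
      exact Real.sqrt_sq ha0.le
    have hLz : L = 0 := by
      apply ContinuousLinearMap.ext
      intro v
      rw [hLv v]
      simp only [ContinuousLinearMap.zero_apply, hsqrt]
      have hcoef : (ε*a)/(((ε*a)^2+0^2)*a) + (-(ε*a)) - 2*(ε*a) = 0 := by
        rw [show ((ε*a)^2+0^2)*a = ε^2 * a^3 by ring, he2, ha3]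
        field_simp
        ring
      linear_combination (v.1.1) * hcoef
    exact hLz ▸ hL
  -- value at the critical points
  have hval : ∀ ε : ℝ, ε = 1 ∨ ε = -1 →
      HH ((ε * a, 0), (0, -(ε * a))) = -((3:ℝ) ^ ((4:ℝ)/3) / 2) := by
    intro ε hε
    have he2 : ε^2 = 1 := by rcases hε with h | h <;> subst h <;> norm_num
    have hsqrt : Real.sqrt ((ε * a)^2 + 0^2) = a := by
      rw [show (ε*a)^2 + 0^2 = a^2 by rw [mul_pow, he2]; ring]
      exact Real.sqrt_sq ha0.le
    have hinv : 1 / a = 3 * a^2 := by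
      rw [div_eq_iff ha0.ne']; linear_combination -3*ha3
    have hBa : (3:ℝ)^((4:ℝ)/3) = 9 * a^2 := by
      have h9 : a * (9*a^2) = 3 := by linear_combination 9*ha3
      exact mul_left_cancel₀ ha0.ne' (hb.trans h9.symm)
    simp only [HH]
    rw [hsqrt, hinv, hBa]
    linear_combination (-3/2*a^2) * he2
  -- forward direction
  have hfwd : ∀ q p : ℝ × ℝ, q ≠ 0 →
      HasFDerivAt HH (0 : ((ℝ × ℝ) × (ℝ × ℝ)) →L[ℝ] ℝ) (q, p) →
      ((q = (a, 0) ∧ p = (0, -a)) ∨ (q = (-a, 0) ∧ p = (0, a))) := by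
    intro q p hq h0
    obtain ⟨L, hL, hLv⟩ := hh_key q p hq
    have hLz : L = 0 := hL.unique h0
    have hq' : q.1 ≠ 0 ∨ q.2 ≠ 0 := by
      by_contra h; push_neg at h; exact hq (Prod.ext h.1 h.2)
    have hs : (0:ℝ) < q.1^2 + q.2^2 := by
      rcases hq' with h | h
      · exact add_pos_of_pos_of_nonneg (by positivity) (sq_nonneg _)
      · exact add_pos_of_nonneg_of_pos (sq_nonneg _) (by positivity)
    have hr : (0:ℝ) < Real.sqrt (q.1^2 + q.2^2) := Real.sqrt_pos.mpr hs
    have hsr : (0:ℝ) < (q.1^2+q.2^2) * Real.sqrt (q.1^2+q.2^2) := mul_pos hs hr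
    have hC : p.1 - q.2 = 0 := by
      have := hLv ((0,0),(1,0)); rw [hLz] at this; simpa using this.symm
    have hD : p.2 + q.1 = 0 := by
      have := hLv ((0,0),(0,1)); rw [hLz] at this; simpa using this.symm
    have hB : q.2/((q.1^2+q.2^2) * Real.sqrt (q.1^2+q.2^2)) - p.1 + q.2 = 0 := by
      have := hLv ((0,1),(0,0)); rw [hLz] at this; simpa using this.symm
    have hA : q.1/((q.1^2+q.2^2) * Real.sqrt (q.1^2+q.2^2)) + p.2 - 2*q.1 = 0 := by
      have := hLv ((1,0),(0,0)); rw [hLz] at this; simpa using this.symm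
    have hp1 : p.1 = q.2 := by linarith
    have hq2 : q.2 = 0 := by
      have h1 : q.2/((q.1^2+q.2^2) * Real.sqrt (q.1^2+q.2^2)) = 0 := by
        rw [hp1] at hB; linarith
      rcases div_eq_zero_iff.mp h1 with h | h
      · exact h
      · exact absurd h hsr.ne'
    have hq1 : q.1 ≠ 0 := by
      rcases hq' with h | h
      · exact h
      · exact absurd hq2 h
    have hp2 : p.2 = -q.1 := by linarith
    rw [hp2] at hA
    have hsr13 : (q.1^2+q.2^2) * Real.sqrt (q.1^2+q.2^2) = 1/3 := by
      have h1 : q.1 / ((q.1^2+q.2^2) * Real.sqrt (q.1^2+q.2^2)) = 3 * q.1 := by linarith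
      rw [div_eq_iff hsr.ne'] at h1
      exact mul_left_cancel₀ (mul_ne_zero (by norm_num : (3:ℝ) ≠ 0) hq1)
        (by linear_combination -h1)
    have habs : |q.1| = a := by
      have h1 : |q.1| ^ 3 = a ^ 3 := by
        rw [ha3, ← hsr13, hq2]
        rw [show q.1^2 + 0^2 = q.1^2 by ring, Real.sqrt_sq_eq_abs]
        rw [← sq_abs]
        ring
      exact (pow_left_inj₀ (abs_nonneg _) ha0.le (by norm_num)).mp h1
    rcases (abs_eq ha0.le).mp habs with h | h
    · left
      exact ⟨Prod.ext h hq2, Prod.ext (by rw [hp1, hq2]) (by rw [hp2, h])⟩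
    · right
      exact ⟨Prod.ext h hq2, Prod.ext (by rw [hp1, hq2]) (by rw [hp2, h]; ring)⟩
  have hane : ((a, 0) : ℝ × ℝ) ≠ 0 := by
    simp [Prod.ext_iff, ha0.ne']
  have hane' : ((-a, 0) : ℝ × ℝ) ≠ 0 := by
    simp [Prod.ext_iff, ha0.ne']
  have hc1 : HasFDerivAt HH (0 : ((ℝ × ℝ) × (ℝ × ℝ)) →L[ℝ] ℝ) ((a,0),(0,-a)) := by
    simpa using hcrit 1 (Or.inl rfl)
  have hc2 : HasFDerivAt HH (0 : ((ℝ × ℝ) × (ℝ × ℝ)) →L[ℝ] ℝ) ((-a,0),(0,a)) := by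
    simpa using hcrit (-1) (Or.inr rfl)
  have hv1 : HH ((a,0),(0,-a)) = -((3:ℝ) ^ ((4:ℝ)/3) / 2) := by
    simpa using hval 1 (Or.inl rfl)
  have hv2 : HH ((-a,0),(0,a)) = -((3:ℝ) ^ ((4:ℝ)/3) / 2) := by
    simpa using hval (-1) (Or.inr rfl)
  refine ⟨fun q p hq => ⟨hfwd q p hq, ?_⟩, fun q p hq h0 => ?_, ?_⟩
  · rintro (⟨hq1, hp1⟩ | ⟨hq1, hp1⟩) <;> subst hq1 <;> subst hp1
    · exact hc1
    · exact hc2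
  · rcases hfwd q p hq h0 with ⟨hq1, hp1⟩ | ⟨hq1, hp1⟩ <;> subst hq1 <;> subst hp1
    · exact hv1
    · exact hv2
  · ext c
    simp only [Set.mem_setOf_eq, Set.mem_singleton_iff]
    constructor
    · rintro ⟨q, p, hq, h0, hc⟩
      rw [← hc]
      rcases hfwd q p hq h0 with ⟨hq1, hp1⟩ | ⟨hq1, hp1⟩ <;> subst hq1 <;> subst hp1
      · exact hv1
      · exact hv2
    · rintro rfl
      exact ⟨(a,0), (0,-a), hane, hc1, hv1⟩
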